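/- The field ℚ(ω_k, √2) does not contain i when 4 ∤ k; consequently, for ε_{abc} ≠ 0 with c = 2 and 4 ∤ k, the matrix ρ_{a2} is not an element of the group ⟨V_{k,a}, ρ_{ab}⟩, so ⟨V_{k,a}, ρ_{ab}⟩ ≠ ⟨V_{k,a}, ρ_{a2}⟩ where {a,b} = {1,3}. -/

import Mathlib

open Matrix Complex
open scoped IntermediateField

noncomputable def σ : Fin 3 → Matrix (Fin 2) (Fin 2) ℂ
  | 0 => !![0, 1; 1, 0]
  | 1 => !![0, -I; I, 0]
  | 2 => !![1, 0; 0, -1]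

noncomputable def ω (k : ℕ) : ℂ := Complex.exp (2 * Real.pi * I / k)

noncomputable def V (k : ℕ) (a : Fin 3) : Matrix (Fin 2) (Fin 2) ℂ :=
  (1 / 2 : ℂ) • ((1 + ω k) • (1 : Matrix (Fin 2) (Fin 2) ℂ) + (1 - ω k) • σ a)

noncomputable def ρ (a b : Fin 3) : Matrix (Fin 2) (Fin 2) ℂ :=
  ((Real.sqrt 2 : ℂ))⁻¹ • (σ a + σ b)

/-- The subgroup of invertible 2×2 complex matrices generated by the units
whose underlying matrices lie in `S`. -/
noncomputable def G (S : Set (Matrix (Fin 2) (Fin 2) ℂ)) :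
    Subgroup (Matrix (Fin 2) (Fin 2) ℂ)ˣ :=
  Subgroup.closure {u : (Matrix (Fin 2) (Fin 2) ℂ)ˣ | (u : Matrix (Fin 2) (Fin 2) ℂ) ∈ S}

/-- Levi-Civita symbol (on `Fin 3`; differences agree with the 1,2,3 convention). -/
def ε (a b c : Fin 3) : ℤ :=
  ((a : ℤ) - (b : ℤ)) * ((b : ℤ) - (c : ℤ)) * ((c : ℤ) - (a : ℤ)) / 2

private lemma pow_congr_mod {ζ : ℂ} {n : ℕ} (h1 : ζ ^ n = 1) {a b : ℕ} (h : a ≡ b [MOD n]) :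
    ζ ^ a = ζ ^ b := by
  conv_lhs => rw [← Nat.div_add_mod a n]
  conv_rhs => rw [← Nat.div_add_mod b n]
  rw [pow_add, pow_add, pow_mul, pow_mul, h1, one_pow, one_pow,
    show a % n = b % n from h]

set_option maxHeartbeats 2000000 in
lemma keyI (k : ℕ) (hk : 1 ≤ k) (h4 : ¬ (4 ∣ k)) :
    Complex.I ∉ IntermediateField.adjoin ℚ ({ω k, (Real.sqrt 2 : ℂ)} : Set ℂ) := by
  intro hI
  have hk0 : k ≠ 0 := by omega
  -- Chinese remainder: m ≡ 7 mod 8, m ≡ 1 mod k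
  have hg : (7:ℕ) ≡ 1 [MOD Nat.gcd 8 k] := by
    have hd : Nat.gcd 8 k ∣ 2 := by
      rcases (Nat.dvd_prime_pow Nat.prime_two).mp
        (show Nat.gcd 8 k ∣ 2^3 from Nat.gcd_dvd_left 8 k) with ⟨i, hi, hgi⟩
      interval_cases i
      · simp [hgi]
      · simp [hgi]
      · exact absurd (hgi ▸ Nat.gcd_dvd_right 8 k) (by simpa using h4)
      · exact absurd (dvd_trans (by norm_num) (hgi ▸ Nat.gcd_dvd_right 8 k)) h4
    exact ((Nat.modEq_iff_dvd' (by norm_num)).mpr (hd.trans (by norm_num))).symm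
  obtain ⟨m, hm8, hmk⟩ := Nat.chineseRemainder' hg
  have hm8' : m % 8 = 7 := hm8
  have hm1 : 1 ≤ m := by omega
  have hcop8 : Nat.Coprime m 8 := by
    have h : Nat.gcd 8 m = 1 := by
      rw [Nat.gcd_rec 8 m, hm8']
      decide
    exact Nat.coprime_comm.mp h
  have hcopk : Nat.Coprime m k := by
    have h1 : k ∣ m - 1 := (Nat.modEq_iff_dvd' hm1).mp hmk.symm
    have h2 : Nat.gcd m k ∣ m - 1 := (Nat.gcd_dvd_right m k).trans h1
    have h3 : Nat.gcd m k ∣ m := Nat.gcd_dvd_left m k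
    have h5 : Nat.gcd m k ∣ 1 := by
      have h6 := Nat.dvd_sub h3 h2
      rwa [Nat.sub_sub_self hm1] at h6
    exact Nat.dvd_one.mp h5
  set n := Nat.lcm 8 k with hn
  have h8n : (8:ℕ) ∣ n := Nat.dvd_lcm_left _ _
  have hkn : k ∣ n := Nat.dvd_lcm_right _ _
  have hn0 : n ≠ 0 := Nat.lcm_ne_zero (by norm_num) hk0
  have hnpos : 0 < n := Nat.pos_of_ne_zero hn0
  have hcopn : Nat.Coprime m n :=
    Nat.Coprime.coprime_dvd_right (Nat.lcm_dvd ⟨k, rfl⟩ (dvd_mul_left k 8))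
      (hcop8.mul_right hcopk)
  set e8 := n / 8 with he8def
  have he8 : 8 * e8 = n := Nat.mul_div_cancel' h8n
  set ek := n / k with hekdef
  have hek : k * ek = n := Nat.mul_div_cancel' hkn
  set ζ := Complex.exp (2 * Real.pi * I / n) with hζdef
  have hζ : IsPrimitiveRoot ζ n := Complex.isPrimitiveRoot_exp n hn0
  have hζ1 : ζ ^ n = 1 := hζ.pow_eq_one
  have hzpow : ∀ c d : ℕ, c * d = n → ζ ^ d = Complex.exp (2 * Real.pi * I / c) := by
    intro c d hcd
    have hc0 : (c:ℂ) ≠ 0 := by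
      intro h
      rw [Nat.cast_eq_zero] at h
      subst h; simp at hcd; omega
    have hn0' : (n:ℂ) ≠ 0 := Nat.cast_ne_zero.mpr hn0
    rw [hζdef, ← Complex.exp_nat_mul]
    congr 1
    have : ((c:ℂ) * d) = (n:ℂ) := by exact_mod_cast congrArg (Nat.cast : ℕ → ℂ) hcd
    field_simp
    linear_combination this
  have hzk : ζ ^ ek = ω k := by rw [hzpow k ek hek, ω]
  set s : ℂ := ((Real.sqrt 2 : ℝ) : ℂ) with hsdef
  have hs2 : s ^ 2 = 2 := by
    rw [hsdef, ← Complex.ofReal_pow, Real.sq_sqrt (by norm_num : (0:ℝ) ≤ 2)]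
    norm_num
  have hz8val : ζ ^ e8 = s / 2 * (1 + I) := by
    rw [hzpow 8 e8 he8,
      show (2 * (Real.pi:ℂ) * I / ((8:ℕ):ℂ) : ℂ) = ((Real.pi / 4 : ℝ) : ℂ) * I by push_cast; ring,
      Complex.exp_mul_I, ← Complex.ofReal_cos, ← Complex.ofReal_sin,
      Real.cos_pi_div_four, Real.sin_pi_div_four]
    rw [hsdef]
    push_cast
    ring
  have hI2 : (ζ ^ e8) ^ 2 = I := by
    rw [hz8val]
    linear_combination ((1 + Complex.I)^2 / 4) * hs2 + ((1:ℂ)/2) * Complex.I_sq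
  have hI3 : Complex.I ^ 3 = -Complex.I := by
    rw [pow_succ, Complex.I_sq]; ring
  have hz7 : (ζ ^ e8) ^ 7 = -I * ζ ^ e8 := by
    calc (ζ ^ e8) ^ 7 = ((ζ ^ e8) ^ 2) ^ 3 * ζ ^ e8 := by ring
    _ = -I * ζ ^ e8 := by rw [hI2, hI3]
  have hsum : ζ ^ e8 + (ζ ^ e8) ^ 7 = s := by
    rw [hz7, hz8val]
    linear_combination (-(s/2)) * Complex.I_sq
  -- the algebra hom
  have hζint : IsIntegral ℚ ζ := (hζ.isIntegral hnpos).tower_top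
  set B := IntermediateField.adjoin.powerBasis hζint with hB
  have hroot : Polynomial.aeval (ζ^m) (minpoly ℚ B.gen) = 0 := by
    erw [IntermediateField.adjoin.powerBasis_gen, IntermediateField.minpoly_gen,
      ← Polynomial.cyclotomic_eq_minpoly_rat hζ hnpos, Polynomial.aeval_def,
      ← Polynomial.eval_map, Polynomial.map_cyclotomic]
    exact (hζ.pow_of_coprime m hcopn).isRoot_cyclotomic hnpos
  set σf : ℚ⟮ζ⟯ →ₐ[ℚ] ℂ := B.lift (ζ^m) hroot with hσf
  have hσgen : σf (IntermediateField.AdjoinSimple.gen ℚ ζ) = ζ^m := B.lift_gen (ζ^m) hroot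
  set gen := IntermediateField.AdjoinSimple.gen ℚ ζ with hgendef
  have hgenval : (gen : ℂ) = ζ := rfl
  have hgenmem : ζ ∈ ℚ⟮ζ⟯ := IntermediateField.mem_adjoin_simple_self ℚ ζ
  -- the fixed intermediate field
  have hinv : ∀ x ∈ AlgHom.equalizer σf (IntermediateField.val ℚ⟮ζ⟯),
      x⁻¹ ∈ AlgHom.equalizer σf (IntermediateField.val ℚ⟮ζ⟯) := by
    intro x hx
    change σf x = IntermediateField.val ℚ⟮ζ⟯ x at hx
    change σf x⁻¹ = IntermediateField.val ℚ⟮ζ⟯ x⁻¹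
    rw [map_inv₀, map_inv₀, hx]
  set E := Subalgebra.toIntermediateField
    (AlgHom.equalizer σf (IntermediateField.val ℚ⟮ζ⟯)) hinv with hE
  set T := E.map (IntermediateField.val ℚ⟮ζ⟯) with hT
  have hmemT : ∀ (x : ℂ) (hx : x ∈ ℚ⟮ζ⟯), σf ⟨x, hx⟩ = x → x ∈ T := by
    intro x hx h
    exact ⟨⟨x, hx⟩, h, rfl⟩
  have hgenpow : ∀ d : ℕ, ((gen ^ d : ℚ⟮ζ⟯) : ℂ) = ζ ^ d := by
    intro d
    exact SubmonoidClass.coe_pow gen d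
  have hσpow : ∀ d : ℕ, σf (gen ^ d) = ζ ^ (m * d) := by
    intro d
    rw [map_pow, hσgen, ← pow_mul]
  -- modular arithmetic facts
  have hA : m * ek ≡ ek [MOD n] := by
    have h := Nat.ModEq.mul_right' ek hmk
    rwa [hek, one_mul] at h
  have hB7 : m * e8 ≡ 7 * e8 [MOD n] := by
    have h := Nat.ModEq.mul_right' e8 hm8
    rwa [he8] at h
  have hC : m * (7 * e8) ≡ e8 [MOD n] := by
    have h1 : m * 7 ≡ 1 [MOD 8] := (hm8.mul_right 7).trans (by decide)
    have h := Nat.ModEq.mul_right' e8 h1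
    rwa [he8, one_mul, mul_assoc] at h
  have hD : m * (2 * e8) ≡ 6 * e8 [MOD n] := by
    have h1 : m * 2 ≡ 6 [MOD 8] := (hm8.mul_right 2).trans (by decide)
    have h := Nat.ModEq.mul_right' e8 h1
    rwa [he8, mul_assoc] at h
  -- the generators are fixed
  have hωT : ω k ∈ T := by
    have hxK : ζ ^ ek ∈ ℚ⟮ζ⟯ := pow_mem hgenmem ek
    rw [← hzk]
    apply hmemT _ hxK
    have heq : (⟨ζ ^ ek, hxK⟩ : ℚ⟮ζ⟯) = gen ^ ek := Subtype.ext (hgenpow ek).symm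
    rw [heq, hσpow]
    exact pow_congr_mod hζ1 hA
  have hsT : s ∈ T := by
    have hval : ζ ^ e8 + ζ ^ (7 * e8) = s := by
      rw [show 7 * e8 = e8 * 7 from mul_comm 7 e8, pow_mul]
      exact hsum
    have hxK : ζ ^ e8 + ζ ^ (7 * e8) ∈ ℚ⟮ζ⟯ := add_mem (pow_mem hgenmem e8) (pow_mem hgenmem _)
    have hxK' : s ∈ ℚ⟮ζ⟯ := hval ▸ hxK
    apply hmemT _ hxK'
    have heq : (⟨s, hxK'⟩ : ℚ⟮ζ⟯) = gen ^ e8 + gen ^ (7 * e8) := by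
      apply Subtype.ext
      show s = ((gen ^ e8 + gen ^ (7*e8) : ℚ⟮ζ⟯) : ℂ)
      rw [AddMemClass.coe_add, hgenpow, hgenpow, hval]
    rw [heq, map_add, hσpow, hσpow, pow_congr_mod hζ1 hB7, pow_congr_mod hζ1 hC, add_comm]
    exact hval
  -- I is fixed, contradiction
  have hFT : IntermediateField.adjoin ℚ ({ω k, s} : Set ℂ) ≤ T := by
    rw [IntermediateField.adjoin_le_iff]
    rintro x (rfl | rfl)
    · exact hωT
    · exact hsT
  have hIT : Complex.I ∈ T := hFT hI
  obtain ⟨y, hyE, hyval⟩ := hIT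
  have hIval : ζ ^ (2 * e8) = Complex.I := by
    rw [show 2 * e8 = e8 * 2 from mul_comm 2 e8, pow_mul]
    exact hI2
  have hy : y = gen ^ (2 * e8) := by
    apply Subtype.ext
    show (y : ℂ) = ((gen ^ (2*e8) : ℚ⟮ζ⟯) : ℂ)
    rw [hgenpow, hIval]
    exact hyval
  have hfix : σf y = Complex.I := by
    have := (AlgHom.mem_equalizer σf (IntermediateField.val ℚ⟮ζ⟯) y).mp hyE
    rw [this]
    exact hyval
  have hmove : σf y = -Complex.I := by
    rw [hy, hσpow, pow_congr_mod hζ1 hD]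
    calc ζ ^ (6 * e8) = ((ζ ^ e8) ^ 2) ^ 3 := by rw [← pow_mul, ← pow_mul]; congr 1; ring
    _ = -Complex.I := by rw [hI2, hI3]
  rw [hfix] at hmove
  have : (2:ℂ) * Complex.I = 0 := by linear_combination hmove
  simp [Complex.I_ne_zero] at this

/-- Units of 2×2 matrices whose entries all lie in `F` form a subgroup. -/
noncomputable def entSub (F : IntermediateField ℚ ℂ) : Subgroup (Matrix (Fin 2) (Fin 2) ℂ)ˣ where
  carrier := {u | ∀ i j, (u : Matrix (Fin 2) (Fin 2) ℂ) i j ∈ F}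
  one_mem' := by
    intro i j
    rw [Units.val_one, Matrix.one_apply]
    split_ifs
    · exact one_mem F
    · exact zero_mem F
  mul_mem' := by
    intro u v hu hv i j
    rw [Units.val_mul, Matrix.mul_apply]
    exact sum_mem (fun c _ => mul_mem (hu i c) (hv c j))
  inv_mem' := by
    intro u hu i j
    rw [Matrix.coe_units_inv, Matrix.inv_def, Ring.inverse_eq_inv, Matrix.smul_apply,
      smul_eq_mul]
    have hdet : (u : Matrix (Fin 2) (Fin 2) ℂ).det ∈ F := by
      rw [Matrix.det_fin_two]
      exact sub_mem (mul_mem (hu 0 0) (hu 1 1)) (mul_mem (hu 0 1) (hu 1 0))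
    refine mul_mem (inv_mem hdet) ?_
    rw [Matrix.adjugate_fin_two]
    fin_cases i <;> fin_cases j <;> simp <;>
      first
        | exact hu 0 0 | exact hu 1 1 | exact hu 0 1 | exact hu 1 0
        | exact neg_mem (hu 0 1) | exact neg_mem (hu 1 0)

theorem stmt19 (k : ℕ) (hk : 1 ≤ k) (h4 : ¬ (4 ∣ k)) :
    (Complex.I ∉ IntermediateField.adjoin ℚ ({ω k, (Real.sqrt 2 : ℂ)} : Set ℂ)) ∧
    ∀ a b : Fin 3, ((a = 0 ∧ b = 2) ∨ (a = 2 ∧ b = 0)) →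
      (∀ u : (Matrix (Fin 2) (Fin 2) ℂ)ˣ,
          (u : Matrix (Fin 2) (Fin 2) ℂ) = ρ a 1 → u ∉ G {V k a, ρ a b}) ∧
      G {V k a, ρ a b} ≠ G {V k a, ρ a 1} := by
  have hI := keyI k hk h4
  refine ⟨hI, ?_⟩
  intro a b hab
  set F := IntermediateField.adjoin ℚ ({ω k, (Real.sqrt 2 : ℂ)} : Set ℂ) with hF
  have hωF : ω k ∈ F := IntermediateField.subset_adjoin ℚ _ (Or.inl rfl)
  have hsF : ((Real.sqrt 2 : ℝ) : ℂ) ∈ F := IntermediateField.subset_adjoin ℚ _ (Or.inr rfl)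
  have hsF' : (((Real.sqrt 2 : ℝ) : ℂ))⁻¹ ∈ F := inv_mem hsF
  have h2F : (2 : ℂ) ∈ F := by
    have := add_mem (one_mem F) (one_mem F)
    norm_num at this ⊢
  have hhalf : (1 / 2 : ℂ) ∈ F := by
    rw [one_div]
    exact inv_mem h2F
  have hs0 : ((Real.sqrt 2 : ℝ) : ℂ) ≠ 0 := by
    simp only [ne_eq, Complex.ofReal_eq_zero]
    positivity
  have hs2 : ((Real.sqrt 2 : ℝ) : ℂ) ^ 2 = 2 := by
    rw [← Complex.ofReal_pow, Real.sq_sqrt (by norm_num : (0:ℝ) ≤ 2)]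
    norm_num
  -- entries of the generating matrices lie in F
  have hVmem : ∀ i j, V k a i j ∈ F := by
    rcases hab with ⟨rfl, -⟩ | ⟨rfl, -⟩ <;>
      intro i j <;> fin_cases i <;> fin_cases j <;>
        simp [V, σ, Matrix.one_apply] <;>
        first
          | exact mul_mem (inv_mem h2F) (add_mem (one_mem F) hωF)
          | exact mul_mem (inv_mem h2F) (sub_mem (one_mem F) hωF)
          | exact mul_mem (inv_mem h2F) (add_mem (one_mem F) (one_mem F))
          | exact mul_mem (inv_mem h2F) (add_mem (add_mem (one_mem F) hωF) (sub_mem hωF (one_mem F)))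
          | exact zero_mem F
          | exact hωF
          | exact one_mem F
          | skip
  have hρmem : ∀ i j, ρ a b i j ∈ F := by
    rcases hab with ⟨rfl, rfl⟩ | ⟨rfl, rfl⟩ <;>
      intro i j <;> fin_cases i <;> fin_cases j <;>
        simp [ρ, σ] <;>
        first
          | exact mul_mem hsF' (one_mem F)
          | exact mul_mem hsF' (neg_mem (one_mem F))
          | exact neg_mem (mul_mem hsF' (one_mem F))
          | exact zero_mem F
          | exact hsF'
          | exact hsF
          | exact neg_mem hsF
          | exact neg_mem hsF'
          | skip
  have hGle : G {V k a, ρ a b} ≤ entSub F := by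
    rw [G, Subgroup.closure_le]
    rintro u hu
    rcases hu with h | h <;> intro i j
    · rw [h]; exact hVmem i j
    · rw [h]; exact hρmem i j
  -- ρ a 1 has an entry generating I over F
  have hkey : ∀ u : (Matrix (Fin 2) (Fin 2) ℂ)ˣ,
      (u : Matrix (Fin 2) (Fin 2) ℂ) = ρ a 1 → u ∉ G {V k a, ρ a b} := by
    intro u huval hu
    have hent := hGle hu
    have h10 : ρ a 1 1 0 ∈ F := by
      rw [← huval]
      exact hent 1 0
    apply hI
    rcases hab with ⟨rfl, -⟩ | ⟨rfl, -⟩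
    · -- a = 0 : entry = (√2)⁻¹ * (1 + I), I = √2 * entry - 1
      have hval : ρ 0 1 1 0 = (((Real.sqrt 2 : ℝ) : ℂ))⁻¹ * (1 + Complex.I) := by
        simp [ρ, σ]
      have : Complex.I = ((Real.sqrt 2 : ℝ) : ℂ) * (ρ 0 1 1 0) - 1 := by
        rw [hval]
        field_simp
        ring
      rw [this]
      exact sub_mem (mul_mem hsF h10) (one_mem F)
    · -- a = 2 : entry = (√2)⁻¹ * I, I = √2 * entry
      have hval : ρ 2 1 1 0 = (((Real.sqrt 2 : ℝ) : ℂ))⁻¹ * Complex.I := by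
        simp [ρ, σ]
      have : Complex.I = ((Real.sqrt 2 : ℝ) : ℂ) * (ρ 2 1 1 0) := by
        rw [hval]
        field_simp
      rw [this]
      exact mul_mem hsF h10
  refine ⟨hkey, ?_⟩
  -- ρ a 1 is an involution, hence a unit in G {V k a, ρ a 1}
  have hsq : ρ a 1 * ρ a 1 = 1 := by
    rcases hab with ⟨rfl, -⟩ | ⟨rfl, -⟩ <;>
      · ext i j
        fin_cases i <;> fin_cases j <;>
          · simp [ρ, σ, Matrix.mul_apply, Fin.sum_univ_two, Matrix.one_apply]
            try field_simp
            try first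
              | linear_combination (-1:ℂ) * Complex.I_sq - hs2
              | linear_combination -hs2
              | ring
  intro hEq
  set u : (Matrix (Fin 2) (Fin 2) ℂ)ˣ := ⟨ρ a 1, ρ a 1, hsq, hsq⟩ with hu
  have hmem : u ∈ G {V k a, ρ a 1} := Subgroup.subset_closure (Or.inr rfl)
  rw [← hEq] at hmem
  exact hkey u rfl hmem
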